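/- Let S be a monoid, U a submonoid of S, and let μ : S → 𝒢 be a monoid homomorphism into a group 𝒢 having the universal property of the universal enveloping group of S: for every group H and every monoid homomorphism f : S → H there is a unique group homomorphism f̂ : 𝒢 → H with f̂ ∘ μ = f. Let Û be the subgroup of 𝒢 generated by μ(U). Then for every d ∈ S: d ∈ WDom_S(U) if and only if μ(d) ∈ Û. -/

import Mathlib

universe u

/-- The weak dominion of a submonoid `U` of a monoid `S`: all `d ∈ S` such that any two
monoid homomorphisms from `S` to a group that agree on `U` also agree on `d`. -/
def WDom (S : Type u) [Monoid S] (U : Submonoid S) : Set S :=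
  {d | ∀ (G : Type u) [Group G] (f g : S →* G), (∀ u ∈ U, f u = g u) → f d = g d}

/-- The analogue of the Stenström version of Isbell's zigzag theorem for the weak
dominion: if `μ : S → 𝒢` is the universal enveloping group of the monoid `S` and `Uhat` is
the subgroup of `𝒢` generated by `μ(U)`, then `d ∈ WDom_S(U)` if and only if
`μ(d) ∈ Uhat`. -/
theorem mem_WDom_iff_mu_mem_closure {S 𝒢 : Type u} [Monoid S] [Group 𝒢]
    (U : Submonoid S) (μ : S →* 𝒢)
    (huniv : ∀ (H : Type u) [Group H] (f : S →* H),
      ∃! fhat : 𝒢 →* H, fhat.comp μ = f)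
    (d : S) :
    d ∈ WDom S U ↔ μ d ∈ Subgroup.closure (⇑μ '' (U : Set S)) := by
  constructor
  · intro hd
    -- Use the construction from the proof that epis in `Grp` are surjective.
    set Uhat : Subgroup 𝒢 := Subgroup.closure (⇑μ '' (U : Set S)) with hUhat
    let ι : GrpCat.of Uhat ⟶ GrpCat.of 𝒢 := GrpCat.ofHom Uhat.subtype
    have hrange : ι.hom.range = Uhat := Subgroup.range_subtype Uhat
    let g' := GrpCat.SurjectiveOfEpiAuxs.g ι
    let h' := GrpCat.SurjectiveOfEpiAuxs.h ι
    have hagree := GrpCat.SurjectiveOfEpiAuxs.agree ι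
    have key : h' (μ d) = g' (μ d) := by
      refine hd _ (h'.comp μ) (g'.comp μ) fun u hu => ?_
      have : μ u ∈ ι.hom.range := by
        rw [hrange]
        exact Subgroup.subset_closure ⟨u, hu, rfl⟩
      have : μ u ∈ { x | h' x = g' x } := by
        rw [← hagree]; exact this
      simpa using this
    have hmem : μ d ∈ { x | h' x = g' x } := key
    rw [← hagree] at hmem
    have : μ d ∈ ι.hom.range := hmem
    rwa [hrange] at this
  · intro hd G _ f g hfg
    obtain ⟨fhat, hf, -⟩ := huniv G f
    obtain ⟨ghat, hg, -⟩ := huniv G g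
    have heq : Set.EqOn fhat ghat (⇑μ '' (U : Set S)) := by
      rintro _ ⟨u, hu, rfl⟩
      have h1 : fhat (μ u) = f u := congrArg (· u) hf
      have h2 : ghat (μ u) = g u := congrArg (· u) hg
      rw [h1, h2, hfg u hu]
    have := MonoidHom.eqOn_closure heq hd
    calc f d = fhat (μ d) := (congrArg (· d) hf).symm
      _ = ghat (μ d) := this
      _ = g d := congrArg (· d) hg
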